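/- Weighted bound on the recursion defect: for all integers t ≥ 1 and k ≥ 1, |Σ_{i=1}^t (−1)^{i−1} a_i P_{t+k−i,M} − P_{t+k,M}| ≤ (t + 1) · C · a_{t+1}. -/

import Mathlib

open Finset


noncomputable def Esym {r : ℕ} (p : Fin r → ℝ) (s : Finset (Fin r)) (n : ℕ) : ℝ :=
  ∑ T ∈ s.powersetCard n, ∏ j ∈ T, p j

lemma Esym_nonneg {r : ℕ} (p : Fin r → ℝ) (hp : ∀ j, 0 ≤ p j) (s : Finset (Fin r)) (n : ℕ) :
    0 ≤ Esym p s n :=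
  Finset.sum_nonneg fun T _ => Finset.prod_nonneg fun j _ => hp j

lemma Esym_zero {r : ℕ} (p : Fin r → ℝ) (s : Finset (Fin r)) : Esym p s 0 = 1 := by
  simp [Esym]

lemma Esym_insert {r : ℕ} (p : Fin r → ℝ) {x : Fin r} {s : Finset (Fin r)} (hx : x ∉ s)
    (n : ℕ) : Esym p (insert x s) (n+1) = Esym p s (n+1) + p x * Esym p s n := by
  unfold Esym
  rw [powersetCard_succ_insert hx, sum_union]
  · congr 1
    rw [sum_image, mul_sum]
    · refine sum_congr rfl fun T hT => ?_
      have hxT : x ∉ T := fun h => hx ((mem_powersetCard.1 hT).1 h)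
      rw [prod_insert hxT]
    · intro T₁ h₁ T₂ h₂ h
      have hx1 : x ∉ T₁ := fun h' => hx ((mem_powersetCard.1 h₁).1 h')
      have hx2 : x ∉ T₂ := fun h' => hx ((mem_powersetCard.1 h₂).1 h')
      rw [← erase_insert hx1, ← erase_insert hx2, h]
  · rw [disjoint_left]
    intro T hT hT'
    obtain ⟨U, hU, rfl⟩ := mem_image.1 hT'
    exact hx ((mem_powersetCard.1 hT).1 (mem_insert_self x U))

lemma Esym_erase {r : ℕ} (p : Fin r → ℝ) (j : Fin r) (n : ℕ) :
    Esym p univ (n+1) = Esym p (univ.erase j) (n+1) + p j * Esym p (univ.erase j) n := by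
  rw [← Esym_insert p (notMem_erase j univ) n, insert_erase (mem_univ j)]

lemma sum_p_Esym {r : ℕ} (p : Fin r → ℝ) (t : ℕ) :
    ∑ j, p j * Esym p (univ.erase j) t = ((t : ℝ) + 1) * Esym p univ (t+1) := by
  have lhs : ∑ j, p j * Esym p (univ.erase j) t
      = ∑ x ∈ (univ : Finset (Fin r)).sigma (fun j => powersetCard t (univ.erase j)),
          p x.1 * ∏ i ∈ x.2, p i := by
    rw [sum_sigma]
    exact sum_congr rfl fun j _ => by rw [Esym, mul_sum]
  have rhs : ((t : ℝ) + 1) * Esym p univ (t+1)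
      = ∑ x ∈ (powersetCard (t+1) (univ : Finset (Fin r))).sigma (fun S => S),
          p x.2 * ∏ i ∈ x.1.erase x.2, p i := by
    rw [sum_sigma, Esym, mul_sum]
    refine sum_congr rfl fun S hS => ?_
    have hcard := (mem_powersetCard.1 hS).2
    have : ∀ j ∈ S, p j * ∏ i ∈ S.erase j, p i = ∏ i ∈ S, p i := fun j hj => by
      rw [← prod_erase_mul S p hj]; ring
    rw [sum_congr rfl this, sum_const, hcard, nsmul_eq_mul]
    push_cast; ring
  rw [lhs, rhs]
  refine sum_nbij' (fun x => ⟨insert x.1 x.2, x.1⟩) (fun x => ⟨x.2, x.1.erase x.2⟩)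
    ?_ ?_ ?_ ?_ ?_
  · rintro ⟨j, T⟩ hx
    simp only [mem_sigma, mem_powersetCard] at hx ⊢
    obtain ⟨-, hT, hc⟩ := hx
    have hjT : j ∉ T := fun h => (notMem_erase j univ) (hT h)
    exact ⟨⟨insert_subset (mem_univ j) (subset_univ T), by rw [card_insert_of_notMem hjT, hc]⟩,
      mem_insert_self j T⟩
  · rintro ⟨S, j⟩ hx
    simp only [mem_sigma, mem_powersetCard] at hx ⊢
    obtain ⟨⟨-, hc⟩, hj⟩ := hx
    exact ⟨mem_univ j, subset_erase.2 ⟨subset_univ _, notMem_erase j S⟩,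
      by rw [card_erase_of_mem hj, hc]; omega⟩
  · rintro ⟨j, T⟩ hx
    simp only [mem_sigma, mem_powersetCard] at hx
    obtain ⟨-, hT, -⟩ := hx
    have hjT : j ∉ T := fun h => (notMem_erase j univ) (hT h)
    simp [erase_insert hjT]
  · rintro ⟨S, j⟩ hx
    simp only [mem_sigma, mem_powersetCard] at hx
    simp [insert_erase hx.2]
  · rintro ⟨j, T⟩ hx
    simp only [mem_sigma, mem_powersetCard] at hx
    obtain ⟨-, hT, -⟩ := hx
    have hjT : j ∉ T := fun h => (notMem_erase j univ) (hT h)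
    simp [erase_insert hjT]

lemma telescope {r : ℕ} (p : Fin r → ℝ) (j : Fin r) (t : ℕ) :
    ∑ i ∈ range (t+1), (-1:ℝ)^i * Esym p univ i * p j ^ (t+1-i)
      = (-1:ℝ)^t * Esym p (univ.erase j) t * p j := by
  induction t with
  | zero => simp [Esym_zero]
  | succ t ih =>
    rw [sum_range_succ]
    have step : ∀ i ∈ range (t+1), (-1:ℝ)^i * Esym p univ i * p j ^ (t+1+1-i)
        = ((-1:ℝ)^i * Esym p univ i * p j ^ (t+1-i)) * p j := by
      intro i hi
      have hi' : i ≤ t := Nat.lt_succ_iff.1 (mem_range.1 hi)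
      have : t+1+1-i = (t+1-i)+1 := by omega
      rw [this, pow_succ]; ring
    rw [sum_congr rfl step, ← sum_mul, ih, Esym_erase p j t]
    have : t+1+1-(t+1) = 1 := by omega
    rw [this, pow_succ, pow_succ]
    ring_nf


/-- Weighted bound on the recursion defect: with weighted power sums
`PM i = ∑ j, m j * p j ^ i` (weights `|m j| ≤ C`), for all `t ≥ 1` and
`k ≥ 1`, `|∑_{i=1}^t (-1)^{i-1} a i * PM (t+k-i) - PM (t+k)| ≤ (t+1) C a (t+1)`. -/
theorem weighted_recursion_defect_bound
    (r : ℕ) (hr : 1 ≤ r) (C : ℝ) (hC : 0 < C)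
    (p : Fin r → ℝ) (hp : ∀ j, 0 ≤ p j) (hpsum : ∑ j, p j = 1)
    (m : Fin r → ℝ) (hm : ∀ j, |m j| ≤ C)
    (PM : ℕ → ℝ) (hPM : ∀ i, 1 ≤ i → PM i = ∑ j, m j * p j ^ i)
    (a : ℕ → ℝ)
    (ha : ∀ n, a n = ∑ S ∈ Finset.powersetCard n (Finset.univ : Finset (Fin r)),
      ∏ j ∈ S, p j) :
    ∀ t k : ℕ, 1 ≤ t → 1 ≤ k →
      |(∑ i ∈ Icc 1 t, (-1 : ℝ) ^ (i - 1) * a i * PM (t + k - i)) - PM (t + k)| ≤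
        ((t : ℝ) + 1) * C * a (t + 1) := by
  intro t k ht hk
  have haE : ∀ n, a n = Esym p univ n := fun n => ha n
  have hp1 : ∀ j, p j ≤ 1 := fun j => by
    calc p j ≤ ∑ i, p i := single_le_sum (fun i _ => hp i) (mem_univ j)
    _ = 1 := hpsum
  -- rewrite the defect as a single sum over j
  have key : (∑ i ∈ Icc 1 t, (-1 : ℝ) ^ (i - 1) * a i * PM (t + k - i)) - PM (t + k)
      = -∑ j, m j * (p j ^ (k-1) * ((-1:ℝ)^t * Esym p (univ.erase j) t * p j)) := by
    have hPM' : ∀ i ∈ Icc 1 t, PM (t + k - i) = ∑ j, m j * p j ^ (t + k - i) := by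
      intro i hi
      exact hPM _ (by have := (mem_Icc.1 hi).2; omega)
    rw [sum_congr rfl fun i hi => by rw [hPM' i hi], hPM (t+k) (by omega)]
    have swap : ∑ i ∈ Icc 1 t, (-1:ℝ)^(i-1) * a i * ∑ j, m j * p j ^ (t+k-i)
        = ∑ j, ∑ i ∈ Icc 1 t, (-1:ℝ)^(i-1) * a i * (m j * p j ^ (t+k-i)) := by
      rw [sum_comm]
      exact sum_congr rfl fun i _ => by rw [mul_sum]
    rw [swap, ← sum_sub_distrib, ← sum_neg_distrib]
    refine sum_congr rfl fun j _ => ?_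
    -- per-j identity
    have expand : ∑ i ∈ range (t+1), (-1:ℝ)^i * a i * p j ^ (t+k-i)
        = p j ^ (k-1) * ((-1:ℝ)^t * Esym p (univ.erase j) t * p j) := by
      have : ∀ i ∈ range (t+1), (-1:ℝ)^i * a i * p j ^ (t+k-i)
          = p j ^ (k-1) * ((-1:ℝ)^i * Esym p univ i * p j ^ (t+1-i)) := by
        intro i hi
        have hi' : i ≤ t := Nat.lt_succ_iff.1 (mem_range.1 hi)
        have harith : t + k - i = (k-1) + (t+1-i) := by omega
        rw [haE, harith, pow_add]; ring
      rw [sum_congr rfl this, ← mul_sum, telescope]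
    have split : ∑ i ∈ range (t+1), (-1:ℝ)^i * a i * p j ^ (t+k-i)
        = a 0 * p j ^ (t+k) + ∑ i ∈ range t, (-1:ℝ)^(i+1) * a (i+1) * p j ^ (t+k-(i+1)) := by
      rw [sum_range_succ']
      simp [add_comm]
    have hIcc : ∑ i ∈ Icc 1 t, (-1:ℝ)^(i-1) * a i * (m j * p j ^ (t+k-i))
        = m j * ∑ i ∈ range t, -((-1:ℝ)^(i+1) * a (i+1) * p j ^ (t+k-(i+1))) := by
      rw [mul_sum, ← Finset.Ico_add_one_right_eq_Icc, sum_Ico_eq_sum_range]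
      refine sum_congr (by simp) fun i _ => ?_
      have h1 : 1 + i - 1 = i := by omega
      have h2 : (1:ℕ) + i = i + 1 := by omega
      rw [h1, h2, pow_succ]
      ring
    have ha0 : a 0 = 1 := by rw [haE]; exact Esym_zero p univ
    rw [hIcc]
    have := split.symm.trans expand
    rw [ha0, one_mul] at this
    -- this : a0... : ∑ range t terms = expand - p^{t+k}
    rw [sum_neg_distrib]
    linear_combination (-(m j)) * this
  rw [key, abs_neg]
  calc |∑ j, m j * (p j ^ (k-1) * ((-1:ℝ)^t * Esym p (univ.erase j) t * p j))|
      ≤ ∑ j, |m j * (p j ^ (k-1) * ((-1:ℝ)^t * Esym p (univ.erase j) t * p j))| :=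
        abs_sum_le_sum_abs _ _
    _ ≤ ∑ j, C * (p j * Esym p (univ.erase j) t) := by
        refine sum_le_sum fun j _ => ?_
        have hE := Esym_nonneg p hp (univ.erase j) t
        have habs : |m j * (p j ^ (k-1) * ((-1:ℝ)^t * Esym p (univ.erase j) t * p j))|
            = |m j| * (p j ^ (k-1) * (Esym p (univ.erase j) t * p j)) := by
          rw [abs_mul, abs_mul, abs_mul, abs_mul, abs_pow, abs_pow, abs_neg, abs_one,
            one_pow, one_mul, abs_of_nonneg (hp j), abs_of_nonneg hE]
        rw [habs]
        have hpk : p j ^ (k-1) * p j ≤ p j := by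
          have : p j ^ (k-1) * p j = p j ^ k := by
            rw [← pow_succ]; congr 1; omega
          rw [this]
          calc p j ^ k ≤ p j ^ 1 := pow_le_pow_of_le_one (hp j) (hp1 j) hk
          _ = p j := pow_one _
        have h1 : p j ^ (k-1) * (Esym p (univ.erase j) t * p j)
            ≤ p j * Esym p (univ.erase j) t := by
          have := mul_le_mul_of_nonneg_right hpk hE
          nlinarith [pow_nonneg (hp j) (k-1)]
        have h2 : |m j| * (p j ^ (k-1) * (Esym p (univ.erase j) t * p j))
            ≤ C * (p j ^ (k-1) * (Esym p (univ.erase j) t * p j)) := by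
          exact mul_le_mul_of_nonneg_right (hm j)
            (mul_nonneg (pow_nonneg (hp j) _) (mul_nonneg hE (hp j)))
        exact h2.trans (mul_le_mul_of_nonneg_left h1 hC.le)
    _ = C * (((t:ℝ)+1) * Esym p univ (t+1)) := by rw [← mul_sum, sum_p_Esym]
    _ = ((t:ℝ)+1) * C * a (t+1) := by rw [haE]; ring
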